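/- Let B be a unital associative ℂ-algebra, let A = B[ħ] (polynomial ring in a central variable ħ), and let t^i_j[n] ∈ A for i, j ∈ {0,…,N−1}, n ≥ 0, with t^i_j[n] = 0 for all but finitely many n. Define T^i_j(z) = δ^i_j + ħ·Σ_{n≥0} (−1)^n z^{−n−1} t^i_j[n] ∈ A[[z^{−1}]], with shifted series T^i_j(z + cħ) defined by binomial expansion of (z + cħ)^{−n−1} in A[[z^{−1}]]. Suppose the quantum determinant relation holds in A[[z^{−1}]]: Σ_{k_0,…,k_{N−1}} Alt(k_0,…,k_{N−1}) · T^{k_0}_0(z) · T^{k_1}_1(z + 2ħ) ⋯ T^{k_{N−1}}_{N−1}(z + 2(N−1)ħ) = 1, where Alt(k_0,…,k_{N−1}) is the sign of the permutation (k_0,…,k_{N−1}) of (0,…,N−1) and is 0 if the indices are not distinct. Then for every n ≥ 0, the trace Σ_{i=0}^{N−1} t^i_i[n] lies in the ideal ħ·A; that is, modulo ħ the operators t^i_j[n] are traceless and provide a basis of 𝔰𝔩_N[[z]]. -/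

import Mathlib

noncomputable section

variable {N : ℕ} {B : Type*} [Ring B] [Algebra ℂ B]

/-- The shifted series `T^i_j(z + cℏ) ∈ A[[z⁻¹]]`, for `A = B[ℏ]` (so `ℏ = Polynomial.X`),
obtained from `T^i_j(z) = δ^i_j + ℏ·Σ_{n≥0} (−1)^n z^{−n−1} t^i_j[n]` by expanding each
`(z + cℏ)^{−n−1}` as the binomial series
`z^{−n−1} Σ_{m≥0} binom(−n−1, m) (cℏ)^m z^{−m}`, with `binom(−n−1, m) = (−1)^m binom(n+m, m)`.
The coefficient of `z^{−d}` (for `d ≥ 1`) is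
`Σ_{m=0}^{d−1} (−1)^{d−1} binom(d−1, m) c^m ℏ^{m+1} t^i_j[d−1−m]`. -/
def Tshift (t : Fin N → Fin N → ℕ → Polynomial B) (c : ℂ) (i j : Fin N) :
    PowerSeries (Polynomial B) :=
  PowerSeries.mk fun d =>
    if d = 0 then (if i = j then 1 else 0)
    else ∑ m ∈ Finset.range d,
      ((-1 : ℂ) ^ (d - 1) * (Nat.choose (d - 1) m : ℂ) * c ^ m) •
        (Polynomial.X ^ (m + 1) * t i j (d - 1 - m))

section Aux
open TrivSqZeroExt PowerSeries

variable {R : Type*} [Ring R]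

@[simp] lemma myFst_pair {R M : Type*} (a : R) (b : M) :
    TrivSqZeroExt.fst ((a, b) : TrivSqZeroExt R M) = a := rfl

@[simp] lemma mySnd_pair {R M : Type*} (a : R) (b : M) :
    TrivSqZeroExt.snd ((a, b) : TrivSqZeroExt R M) = b := rfl

lemma mycoeff_one_mul (p q : Polynomial R) :
    (p * q).coeff 1 = p.coeff 0 * q.coeff 1 + p.coeff 1 * q.coeff 0 := by
  rw [Polynomial.coeff_mul, Finset.Nat.sum_antidiagonal_succ]
  simp

/-- the underlying function of the first-order jet map. -/
def myPhiFun (F : PowerSeries (Polynomial R)) : DualNumber (PowerSeries R) :=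
  (PowerSeries.mk fun d => (PowerSeries.coeff d F).coeff 0,
   PowerSeries.mk fun d => (PowerSeries.coeff d F).coeff 1)

@[simp] lemma fst_myPhiFun (F : PowerSeries (Polynomial R)) :
    (myPhiFun F).fst = PowerSeries.mk fun d => (PowerSeries.coeff d F).coeff 0 := rfl

@[simp] lemma snd_myPhiFun (F : PowerSeries (Polynomial R)) :
    (myPhiFun F).snd = PowerSeries.mk fun d => (PowerSeries.coeff d F).coeff 1 := rfl

/-- the first-order jet map, as a ring homomorphism. -/
def myPhi (R : Type*) [Ring R] :
    PowerSeries (Polynomial R) →+* DualNumber (PowerSeries R) where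
  toFun := myPhiFun
  map_zero' := by
    refine TrivSqZeroExt.ext ?_ ?_ <;> ext d <;> simp
  map_one' := by
    refine TrivSqZeroExt.ext ?_ ?_ <;> ext d <;>
      simp [PowerSeries.coeff_one, Polynomial.coeff_one,
        apply_ite (fun p : Polynomial R => p.coeff 0),
        apply_ite (fun p : Polynomial R => p.coeff 1)]
  map_add' F G := by
    refine TrivSqZeroExt.ext ?_ ?_ <;> ext d <;> simp
  map_mul' F G := by
    refine TrivSqZeroExt.ext ?_ ?_ <;> ext d
    · simp [fst_mul, PowerSeries.coeff_mul, Polynomial.mul_coeff_zero]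
    · rw [snd_mul]
      simp only [smul_eq_mul, MulOpposite.smul_eq_mul_unop, MulOpposite.unop_op,
        fst_myPhiFun, snd_myPhiFun, map_add, PowerSeries.coeff_mul, PowerSeries.coeff_mk,
        mycoeff_one_mul]
      exact (Polynomial.finset_sum_coeff (Finset.HasAntidiagonal.antidiagonal d)
        (fun p => (PowerSeries.coeff p.1 F) * (PowerSeries.coeff p.2 G)) 1).trans
        ((Finset.sum_congr rfl fun p _ => mycoeff_one_mul _ _).trans Finset.sum_add_distrib)

@[simp] lemma myPhi_apply (F : PowerSeries (Polynomial R)) : myPhi R F = myPhiFun F := rfl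

lemma fst_list_prod_eq_zero (l : List (DualNumber R)) (p : ℕ) (hp : p < l.length)
    (h : (l[p]'hp).fst = 0) : l.prod.fst = 0 := by
  induction l generalizing p with
  | nil => simp at hp
  | cons x xs ih =>
    rw [List.prod_cons, fst_mul]
    cases p with
    | zero =>
      rw [List.getElem_cons_zero] at h
      rw [h, zero_mul]
    | succ p =>
      rw [ih p (by simpa using hp) (by simpa using h), mul_zero]

lemma prod_eq_zero_of_two (l : List (DualNumber R)) (p q : ℕ) (hpq : p < q)
    (hq : q < l.length) (hp0 : (l[p]'(hpq.trans hq)).fst = 0) (hq0 : (l[q]'hq).fst = 0) :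
    l.prod = 0 := by
  induction l generalizing p q with
  | nil => simp at hq
  | cons x xs ih =>
    rw [List.prod_cons]
    cases p with
    | zero =>
      obtain ⟨q', rfl⟩ : ∃ q', q = q' + 1 := ⟨q - 1, by omega⟩
      rw [List.getElem_cons_zero] at hp0
      have hxs : xs.prod.fst = 0 :=
        fst_list_prod_eq_zero xs q' (by simpa using hq) (by simpa using hq0)
      refine TrivSqZeroExt.ext ?_ ?_
      · rw [fst_mul, hp0, zero_mul, fst_zero]
      · rw [snd_mul, hp0, hxs, snd_zero]
        simp
    | succ p =>
      cases q with
      | zero => omega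
      | succ q =>
        rw [ih p q (by omega) (by simpa using hq) (by simpa using hp0) (by simpa using hq0),
          mul_zero]

lemma prod_of_fst_eq_one (l : List (DualNumber R)) (h : ∀ x ∈ l, x.fst = 1) :
    l.prod = (1, (l.map TrivSqZeroExt.snd).sum) := by
  induction l with
  | nil =>
    refine TrivSqZeroExt.ext ?_ ?_ <;> simp
  | cons x xs ih =>
    rw [List.prod_cons, ih (fun y hy => h y (List.mem_cons_of_mem x hy))]
    refine TrivSqZeroExt.ext ?_ ?_
    · erw [fst_mul, h x List.mem_cons_self, myFst_pair, one_mul]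
    · erw [snd_mul, h x List.mem_cons_self, myFst_pair, mySnd_pair, mySnd_pair]
      show _ = (List.map snd (x :: xs)).sum
      rw [one_smul, MulOpposite.op_one, one_smul, List.map_cons, List.sum_cons]
      exact add_comm _ _

end Aux

open TrivSqZeroExt in
/-- the reduction of `Tshift` modulo `ℏ²`: a Kronecker delta plus `ℏ` times `myS`. -/
lemma myPhi_Tshift (t : Fin N → Fin N → ℕ → Polynomial B) (c : ℂ) (i j : Fin N) :
    myPhi B (Tshift t c i j) =
      (((if i = j then 1 else 0) : PowerSeries B),
        PowerSeries.mk fun d =>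
          if d = 0 then 0 else ((-1 : ℂ) ^ (d - 1)) • (t i j (d - 1)).coeff 0) := by
  refine TrivSqZeroExt.ext ?_ ?_ <;> ext d <;>
    rw [myPhi_apply] <;>
    simp only [fst_myPhiFun, snd_myPhiFun, myFst_pair, mySnd_pair, PowerSeries.coeff_mk, Tshift]
  · by_cases hd : d = 0
    · subst hd
      simp [apply_ite (fun p : Polynomial B => p.coeff 0), Polynomial.coeff_one,
        PowerSeries.coeff_zero_eq_constantCoeff, apply_ite (PowerSeries.constantCoeff (R := B))]
    · rw [if_neg hd]
      rw [Polynomial.finset_sum_coeff]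
      have : ∀ m ∈ Finset.range d,
          (((-1 : ℂ) ^ (d - 1) * (Nat.choose (d - 1) m : ℂ) * c ^ m) •
            (Polynomial.X ^ (m + 1) * t i j (d - 1 - m))).coeff 0 = 0 := by
        intro m _
        rw [Polynomial.coeff_smul, Polynomial.mul_coeff_zero, Polynomial.coeff_X_pow]
        simp
      rw [Finset.sum_congr rfl this, Finset.sum_const_zero]
      rcases eq_or_ne i j with h | h <;> simp [h, PowerSeries.coeff_one, hd]
  · by_cases hd : d = 0
    · subst hd
      simp [apply_ite (fun p : Polynomial B => p.coeff 1), Polynomial.coeff_one]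
    · rw [if_neg hd, if_neg hd]
      rw [Polynomial.finset_sum_coeff]
      rw [Finset.sum_eq_single_of_mem 0 (Finset.mem_range.mpr (Nat.pos_of_ne_zero hd))]
      · rw [Polynomial.coeff_smul, mycoeff_one_mul]
        simp [Polynomial.coeff_X_pow]
      · intro m _ hm
        rw [Polynomial.coeff_smul, mycoeff_one_mul]
        have h1 : (Polynomial.X ^ (m + 1) : Polynomial B).coeff 0 = 0 := by
          rw [Polynomial.coeff_X_pow]; simp
        have h2 : (Polynomial.X ^ (m + 1) : Polynomial B).coeff 1 = 0 := by
          rw [Polynomial.coeff_X_pow]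
          simp only [ite_eq_right_iff]
          omega
        rw [h1, h2, zero_mul, zero_mul, add_zero, smul_zero]

/-- If the quantum determinant relation
`Σ Alt(k_0,…,k_{N−1}) T^{k_0}_0(z) T^{k_1}_1(z + 2ℏ) ⋯ T^{k_{N−1}}_{N−1}(z + 2(N−1)ℏ) = 1`
holds (the sum over permutations with their signs, the shifts coming from the framing
anomaly), then modulo `ℏ` the operators `t^i_j[n]` are traceless:
`Σ_i t^i_i[n] ∈ ℏ·A`, so they provide a basis of `𝔰𝔩_N[[z]]`. -/
theorem qdet_implies_traceless_mod_hbar (N : ℕ) (hN : 2 ≤ N)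
    (B : Type*) [Ring B] [Algebra ℂ B]
    (t : Fin N → Fin N → ℕ → Polynomial B)
    (hfin : ∀ i j : Fin N, ∃ M : ℕ, ∀ n : ℕ, M ≤ n → t i j n = 0)
    (hqdet : (∑ σ : Equiv.Perm (Fin N),
        (Equiv.Perm.sign σ : ℤ) •
          (List.ofFn fun r : Fin N => Tshift t (2 * (r : ℕ) : ℂ) (σ r) r).prod) = 1) :
    ∀ n : ℕ, ∃ a : Polynomial B,
      (∑ i : Fin N, t i i n) = Polynomial.X * a := by
  classical
  intro n
  set v : Fin N → PowerSeries B := fun r =>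
    PowerSeries.mk fun d => if d = 0 then 0 else ((-1 : ℂ) ^ (d - 1)) • (t r r (d - 1)).coeff 0
    with hv
  have key : ∀ σ : Equiv.Perm (Fin N),
      (List.ofFn fun r : Fin N => myPhi B (Tshift t (2 * (r : ℕ) : ℂ) (σ r) r)).prod =
        if σ = 1 then ((1 : PowerSeries B), ∑ r : Fin N, v r) else 0 := by
    intro σ
    by_cases hσ : σ = 1
    · subst hσ
      rw [if_pos rfl, prod_of_fst_eq_one _ ?_]
      · refine congrArg (Prod.mk 1) ?_
        rw [List.map_ofFn]
        have heq : (TrivSqZeroExt.snd ∘ fun r : Fin N =>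
            myPhi B (Tshift t (2 * (r : ℕ) : ℂ) ((1 : Equiv.Perm (Fin N)) r) r)) = v := by
          funext r
          rw [Function.comp_apply, myPhi_Tshift, mySnd_pair, hv]
          simp
        rw [heq, List.sum_ofFn]
      · intro x hx
        obtain ⟨r, rfl⟩ := Set.mem_range.mp ((List.mem_ofFn' _ _).mp hx)
        rw [myPhi_Tshift, myFst_pair]
        simp
    · rw [if_neg hσ]
      obtain ⟨p, hp⟩ : ∃ p, σ p ≠ p := by
        by_contra h
        push_neg at h
        exact hσ (Equiv.ext h)
      have hq : σ (σ p) ≠ σ p := fun h => hp (σ.injective h)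
      have hfst : ∀ r : Fin N, σ r ≠ r →
          (((List.ofFn fun r : Fin N =>
              myPhi B (Tshift t (2 * (r : ℕ) : ℂ) (σ r) r))[(r : ℕ)]'
            (by simpa using r.isLt)) : DualNumber (PowerSeries B)).fst = 0 := by
        intro r hr
        rw [List.getElem_ofFn]
        simp only [Fin.eta]
        rw [myPhi_Tshift, myFst_pair, if_neg hr]
      have hpq : ((p : ℕ) : ℕ) ≠ ((σ p : Fin N) : ℕ) := by
        intro h
        exact hp (Fin.ext h).symm
      rcases lt_or_gt_of_ne hpq with h | h
      · exact prod_eq_zero_of_two _ _ _ h (by simpa using (σ p).isLt)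
          (hfst p hp) (hfst (σ p) hq)
      · exact prod_eq_zero_of_two _ _ _ h (by simpa using p.isLt)
          (hfst (σ p) hq) (hfst p hp)
  have H2 := congrArg (myPhi B) hqdet
  rw [map_sum, map_one] at H2
  simp only [map_zsmul, map_list_prod, List.map_ofFn, Function.comp_def] at H2
  simp only [key] at H2
  rw [Finset.sum_eq_single (1 : Equiv.Perm (Fin N))] at H2
  rotate_left
  · intro σ _ hσ
    rw [if_neg hσ]
    exact smul_zero (A := DualNumber (PowerSeries B)) _
  · intro h
    exact absurd (Finset.mem_univ _) h
  erw [if_pos rfl, Equiv.Perm.sign_one, Units.val_one, one_smul] at H2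
  have Hsnd := congrArg TrivSqZeroExt.snd H2
  rw [mySnd_pair, TrivSqZeroExt.snd_one] at Hsnd
  have hc := congrArg (PowerSeries.coeff (n + 1)) Hsnd
  rw [map_sum, map_zero] at hc
  have hterm : ∀ r : Fin N, PowerSeries.coeff (n + 1) (v r) =
      ((-1 : ℂ) ^ n) • (t r r n).coeff 0 := by
    intro r
    rw [hv]
    simp
  rw [Finset.sum_congr rfl fun r _ => hterm r, ← Finset.smul_sum] at hc
  have h1 : (∑ r : Fin N, (t r r n).coeff 0) = 0 := by
    calc (∑ r : Fin N, (t r r n).coeff 0)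
        = (1 : ℂ) • ∑ r : Fin N, (t r r n).coeff 0 := (one_smul _ _).symm
      _ = ((-1 : ℂ) ^ n * (-1 : ℂ) ^ n) • ∑ r : Fin N, (t r r n).coeff 0 := by
          rw [← pow_add, Even.neg_one_pow ⟨n, rfl⟩]
      _ = ((-1 : ℂ) ^ n) • (((-1 : ℂ) ^ n) • ∑ r : Fin N, (t r r n).coeff 0) := by
          rw [smul_smul]
      _ = 0 := by rw [hc, smul_zero]
  refine ⟨(∑ i : Fin N, t i i n).divX, ?_⟩
  have h2 : (∑ i : Fin N, t i i n).coeff 0 = 0 := by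
    rw [Polynomial.finset_sum_coeff]
    exact h1
  conv_lhs => rw [← Polynomial.X_mul_divX_add (∑ i : Fin N, t i i n)]
  rw [h2, map_zero, add_zero]
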